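/- Let H be an edge arithmetic n-quasicluster in which every edge contains at most one vertex of odd degree. Then χ(H) ≤ n. -/
import Mathlib


/-- `S ⊆ ZMod n` is a `k`-arithmetic progression of length `l`, enumerated (with
distinct values) by `v 1, …, v l` with consecutive differences `k`. -/
def IsArithProg (n : ℕ) (k : ℕ) (v : ℕ → ZMod n) (l : ℕ)
    (S : Finset (ZMod n)) : Prop :=
  (∀ j, 1 ≤ j → j < l → v (j + 1) - v j = (k : ZMod n)) ∧
  (∀ j j', 1 ≤ j → j ≤ l → 1 ≤ j' → j' ≤ l → v j = v j' → j = j') ∧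
  S = (Finset.Icc 1 l).image v

lemma val_eq {n k l : ℕ} {v : ℕ → ZMod n}
    (hv : ∀ j, 1 ≤ j → j < l → v (j + 1) - v j = (k : ZMod n)) :
    ∀ j, 1 ≤ j → j ≤ l → v j = v 1 + ((j - 1 : ℕ) : ZMod n) * (k : ZMod n) := by
  intro j h1 hl
  induction j with
  | zero => omega
  | succ m ih =>
    rcases Nat.eq_zero_or_pos m with hm | hm
    · subst hm; simp
    · have hml : m < l := by omega
      have hstep : v (m + 1) = v m + (k : ZMod n) := by
        have := hv m hm hml
        linear_combination this
      have hmv := ih hm (by omega)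
      have hcast : ((m + 1 - 1 : ℕ) : ZMod n) = ((m - 1 : ℕ) : ZMod n) + 1 := by
        have : m + 1 - 1 = (m - 1) + 1 := by omega
        rw [this]; push_cast; ring
      rw [hstep, hmv, hcast]; ring

lemma pair_sum {n k l : ℕ} {v w : ℕ → ZMod n}
    (hv : ∀ j, 1 ≤ j → j < l → v (j + 1) - v j = (k : ZMod n))
    (hw : ∀ j, 1 ≤ j → j < l → w (j + 1) - w j = (k : ZMod n)) :
    ∀ j, 1 ≤ j → j ≤ l → v j + w (l + 1 - j) = v 1 + w l := by
  intro j h1 hl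
  have h1' : (1 : ℕ) ≤ l := le_trans h1 hl
  rw [val_eq hv j h1 hl, val_eq hw (l + 1 - j) (by omega) (by omega),
      val_eq hw l h1' le_rfl]
  have hcast : ((j - 1 : ℕ) : ZMod n) + ((l + 1 - j - 1 : ℕ) : ZMod n)
      = ((l - 1 : ℕ) : ZMod n) := by
    rw [← Nat.cast_add]
    congr 1
    omega
  linear_combination (k : ZMod n) * hcast

lemma prog_card {n k l : ℕ} {v : ℕ → ZMod n} {S : Finset (ZMod n)}
    (h : IsArithProg n k v l S) : S.card = l := by
  rw [h.2.2, Finset.card_image_of_injOn, Nat.card_Icc]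
  · omega
  · intro a ha b hb hab
    rw [Finset.coe_Icc, Set.mem_Icc] at ha hb
    exact h.2.1 a b ha.1 ha.2 hb.1 hb.2 hab

/-- Case 1: a single arithmetic progression has a reflection center `τ`;
a point fixed by the reflection forces odd length. -/
lemma case_one {n k l : ℕ} {v : ℕ → ZMod n} {S : Finset (ZMod n)}
    (h : IsArithProg n k v l S) :
    ∃ τ : ZMod n, (∀ y ∈ S, τ - y ∈ S) ∧ (∀ x ∈ S, τ = x + x → Odd l) := by
  refine ⟨v 1 + v l, ?_, ?_⟩
  · intro y hy
    rw [h.2.2] at hy ⊢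
    obtain ⟨j, hj, rfl⟩ := Finset.mem_image.mp hy
    rw [Finset.mem_Icc] at hj
    have := pair_sum h.1 h.1 j hj.1 hj.2
    have heq : v 1 + v l - v j = v (l + 1 - j) := by linear_combination this.symm
    rw [heq]
    exact Finset.mem_image.mpr ⟨l + 1 - j, Finset.mem_Icc.mpr ⟨by omega, by omega⟩, rfl⟩
  · intro x hx heq
    rw [h.2.2] at hx
    obtain ⟨j, hj, rfl⟩ := Finset.mem_image.mp hx
    rw [Finset.mem_Icc] at hj
    have hps := pair_sum h.1 h.1 j hj.1 hj.2
    have hfix : v (l + 1 - j) = v j := by linear_combination hps + heq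
    have hidx := h.2.1 (l + 1 - j) j (by omega) (by omega) hj.1 hj.2 hfix
    exact ⟨j - 1, by omega⟩

/-- Case 2: a disjoint union of two equal-length progressions has a
swapping reflection center `τ`; no point can be fixed. -/
lemma case_two {n k l : ℕ} {v w : ℕ → ZMod n} {A B : Finset (ZMod n)}
    (hA : IsArithProg n k v l A) (hB : IsArithProg n k w l B)
    (hd : Disjoint A B) :
    ∃ τ : ZMod n, (∀ y ∈ A ∪ B, τ - y ∈ A ∪ B) ∧
      (∀ x ∈ A ∪ B, τ = x + x → False) := by
  have hmemB : ∀ j, 1 ≤ j → j ≤ l → w j ∈ B := by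
    intro j h1 hl
    rw [hB.2.2]
    exact Finset.mem_image.mpr ⟨j, Finset.mem_Icc.mpr ⟨h1, hl⟩, rfl⟩
  have hmemA : ∀ j, 1 ≤ j → j ≤ l → v j ∈ A := by
    intro j h1 hl
    rw [hA.2.2]
    exact Finset.mem_image.mpr ⟨j, Finset.mem_Icc.mpr ⟨h1, hl⟩, rfl⟩
  refine ⟨v 1 + w l, ?_, ?_⟩
  · intro y hy
    rcases Finset.mem_union.mp hy with hy | hy
    · rw [hA.2.2] at hy
      obtain ⟨j, hj, rfl⟩ := Finset.mem_image.mp hy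
      rw [Finset.mem_Icc] at hj
      have := pair_sum hA.1 hB.1 j hj.1 hj.2
      have heq : v 1 + w l - v j = w (l + 1 - j) := by linear_combination this.symm
      rw [heq]
      exact Finset.mem_union_right _ (hmemB _ (by omega) (by omega))
    · rw [hB.2.2] at hy
      obtain ⟨j, hj, rfl⟩ := Finset.mem_image.mp hy
      rw [Finset.mem_Icc] at hj
      have h1l : (1 : ℕ) ≤ l := le_trans hj.1 hj.2
      have h1 := pair_sum hA.1 hB.1 (l + 1 - j) (by omega) (by omega)
      have hidx : l + 1 - (l + 1 - j) = j := by omega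
      rw [hidx] at h1
      have heq : v 1 + w l - w j = v (l + 1 - j) := by linear_combination h1.symm
      rw [heq]
      exact Finset.mem_union_left _ (hmemA _ (by omega) (by omega))
  · intro x hx heq
    rcases Finset.mem_union.mp hx with hx | hx
    · rw [hA.2.2] at hx
      obtain ⟨j, hj, rfl⟩ := Finset.mem_image.mp hx
      rw [Finset.mem_Icc] at hj
      have hps := pair_sum hA.1 hB.1 j hj.1 hj.2
      have hfix : w (l + 1 - j) = v j := by linear_combination hps + heq
      have : v j ∈ B := hfix ▸ hmemB _ (by omega) (by omega)
      exact Finset.disjoint_left.mp hd (hmemA _ hj.1 hj.2) this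
    · rw [hB.2.2] at hx
      obtain ⟨j, hj, rfl⟩ := Finset.mem_image.mp hx
      rw [Finset.mem_Icc] at hj
      have h1l : (1 : ℕ) ≤ l := le_trans hj.1 hj.2
      have h1 := pair_sum hA.1 hB.1 (l + 1 - j) (by omega) (by omega)
      have hidx : l + 1 - (l + 1 - j) = j := by omega
      rw [hidx] at h1
      have hfix : v (l + 1 - j) = w j := by linear_combination h1 + heq
      have : w j ∈ A := hfix ▸ hmemA _ (by omega) (by omega)
      exact Finset.disjoint_left.mp hd this (hmemB _ hj.1 hj.2)

/-- Let `H` be an edge arithmetic `n`-quasicluster in which every edge contains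
at most one vertex of odd degree. Then `χ(H) ≤ n`. -/
theorem stmt15 {α : Type*} [DecidableEq α] (n : ℕ) (hn : 2 ≤ n)
    (E : Finset (Finset α))
    (hcard : E.card = n)
    (hsize : ∀ e ∈ E, 2 ≤ e.card ∧ e.card ≤ n)
    (hinter : ∀ e ∈ E, ∀ f ∈ E, e ≠ f → (e ∩ f).card = 1)
    (hdeg : ∀ u : α, (∃ e ∈ E, u ∈ e) →
      2 ≤ (E.filter (fun e => u ∈ e)).card)
    (φ : Finset α → ZMod n)
    (hφinj : ∀ e ∈ E, ∀ f ∈ E, φ e = φ f → e = f)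
    (hφsurj : ∀ c : ZMod n, ∃ e ∈ E, φ e = c)
    (harith : ∀ u : α, (∃ e ∈ E, u ∈ e) → ∃ k, 1 ≤ k ∧ k ≤ n / 2 ∧
      ((∃ l v, IsArithProg n k v l ((E.filter (fun e => u ∈ e)).image φ)) ∨
       (∃ l v w A B, IsArithProg n k v l A ∧ IsArithProg n k w l B ∧
          Disjoint A B ∧ (E.filter (fun e => u ∈ e)).image φ = A ∪ B)))
    (hoddunique : ∀ e ∈ E, ∀ u ∈ e, ∀ w ∈ e,
      Odd (E.filter (fun f => u ∈ f)).card →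
      Odd (E.filter (fun f => w ∈ f)).card → u = w) :
    ∃ c : α → ZMod n, ∀ e ∈ E, ∀ u ∈ e, ∀ v ∈ e, u ≠ v → c u ≠ c v := by
  classical
  -- For each covered vertex, produce a reflection center with the key properties.
  have key : ∀ u : α, (∃ e ∈ E, u ∈ e) → ∃ τ : ZMod n,
      (∀ y ∈ (E.filter (fun e => u ∈ e)).image φ,
        τ - y ∈ (E.filter (fun e => u ∈ e)).image φ) ∧
      (∀ x ∈ (E.filter (fun e => u ∈ e)).image φ, τ = x + x →
        Odd (E.filter (fun e => u ∈ e)).card) := by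
    intro u hu
    obtain ⟨k, -, -, hcase | hcase⟩ := harith u hu
    · obtain ⟨l, v, hprog⟩ := hcase
      obtain ⟨τ, hcl, hodd⟩ := case_one hprog
      refine ⟨τ, hcl, fun x hx heq => ?_⟩
      have hcardS : ((E.filter (fun e => u ∈ e)).image φ).card = l := prog_card hprog
      have himg : ((E.filter (fun e => u ∈ e)).image φ).card
          = (E.filter (fun e => u ∈ e)).card := by
        apply Finset.card_image_of_injOn
        intro a ha b hb hab
        rw [Finset.coe_filter, Set.mem_setOf_eq] at ha hb
        exact hφinj a ha.1 b hb.1 hab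
      rw [← himg, hcardS]
      exact hodd x hx heq
    · obtain ⟨l, v, w, A, B, hA, hB, hd, hU⟩ := hcase
      obtain ⟨τ, hcl, hbad⟩ := case_two hA hB hd
      rw [hU]
      exact ⟨τ, hcl, fun x hx heq => absurd (hbad x hx heq) not_false⟩
  choose τ hτ using key
  refine ⟨fun u => if h : ∃ e ∈ E, u ∈ e then τ u h else 0, ?_⟩
  intro e he u hu v hv huv hc
  have hu' : ∃ e ∈ E, u ∈ e := ⟨e, he, hu⟩
  have hv' : ∃ e ∈ E, v ∈ e := ⟨e, he, hv⟩
  simp only [dif_pos hu', dif_pos hv'] at hc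
  -- The two label sets meet exactly in φ e.
  have hinterFS : ((E.filter (fun f => u ∈ f)).image φ) ∩
      ((E.filter (fun f => v ∈ f)).image φ) = {φ e} := by
    ext x
    simp only [Finset.mem_inter, Finset.mem_image, Finset.mem_filter,
      Finset.mem_singleton]
    constructor
    · rintro ⟨⟨f, ⟨hfE, hfu⟩, rfl⟩, ⟨g, ⟨hgE, hgv⟩, hgf⟩⟩
      have hfg : g = f := hφinj g hgE f hfE hgf
      subst hfg
      by_cases hge : g = e
      · rw [hge]
      · exfalso
        have h2 : ({u, v} : Finset α) ⊆ g ∩ e := by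
          intro x hx
          rcases Finset.mem_insert.mp hx with rfl | hx
          · exact Finset.mem_inter.mpr ⟨hfu, hu⟩
          · rw [Finset.mem_singleton] at hx
            subst hx
            exact Finset.mem_inter.mpr ⟨hgv, hv⟩
        have hc2 : 2 ≤ (g ∩ e).card := by
          calc 2 = ({u, v} : Finset α).card := by
                rw [Finset.card_insert_of_notMem (by simpa using huv),
                  Finset.card_singleton]
          _ ≤ (g ∩ e).card := Finset.card_le_card h2
        rw [hinter g hgE e he hge] at hc2
        omega
    · rintro rfl
      exact ⟨⟨e, ⟨he, hu⟩, rfl⟩, ⟨e, ⟨he, hv⟩, rfl⟩⟩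
  have hφeu : φ e ∈ (E.filter (fun f => u ∈ f)).image φ :=
    Finset.mem_image.mpr ⟨e, Finset.mem_filter.mpr ⟨he, hu⟩, rfl⟩
  have hφev : φ e ∈ (E.filter (fun f => v ∈ f)).image φ :=
    Finset.mem_image.mpr ⟨e, Finset.mem_filter.mpr ⟨he, hv⟩, rfl⟩
  -- The reflection of φ e lies in both label sets, hence equals φ e.
  have hru : τ u hu' - φ e ∈ (E.filter (fun f => u ∈ f)).image φ :=
    (hτ u hu').1 _ hφeu
  have hrv : τ u hu' - φ e ∈ (E.filter (fun f => v ∈ f)).image φ := by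
    rw [hc]
    exact (hτ v hv').1 _ hφev
  have hmem : τ u hu' - φ e ∈ ({φ e} : Finset (ZMod n)) := by
    rw [← hinterFS]
    exact Finset.mem_inter.mpr ⟨hru, hrv⟩
  have hτeq : τ u hu' = φ e + φ e := by
    have := Finset.mem_singleton.mp hmem
    linear_combination this
  have hoddu : Odd (E.filter (fun f => u ∈ f)).card :=
    (hτ u hu').2 (φ e) hφeu hτeq
  have hoddv : Odd (E.filter (fun f => v ∈ f)).card :=
    (hτ v hv').2 (φ e) hφev (by rw [← hc]; exact hτeq)
  exact huv (hoddunique e he u hu v hv hoddu hoddv)
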